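/- Given a number of dimensions k > 0 and a list data of data points each of length k, the k-d tree built from data is properly bounded by the fully unconstrained bounding box: kdtree_bounded (build_kdtree k data) (mk_bbox (repeat None k) (repeat None k)) = true. -/

import Mathlib

/-- `le` is transitive and total. -/
def le_props {X : Type} (le : X → X → Bool) : Prop :=
  (∀ a b c, le a b = true → le b c = true → le a c = true) ∧
  (∀ a b, le a b = true ∨ le b a = true)

/-- Fueled quickselect. -/
def qsp {X : Type} : Nat → Nat → List X → (X → X → Bool) → Option (List X × X × List X)
  | 0, _, _, _ => none
  | steps + 1, k, l, le =>
    match l with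
    | [] => none
    | pivot :: lst =>
      let sm := lst.filter (fun x => le x pivot && !le pivot x)
      let eq := lst.filter (fun x => le x pivot && le pivot x)
      let lg := lst.filter (fun x => !le x pivot)
      if k < sm.length then
        match qsp steps k sm le with
        | none => none
        | some (a, x, b) => some (a, x, b ++ ((pivot :: eq) ++ lg))
      else if sm.length + eq.length < k then
        match qsp steps (k - (sm.length + eq.length + 1)) lg le with
        | none => none
        | some (a, x, b) => some (a ++ (sm ++ (pivot :: eq)), x, b)
      else
        some (sm ++ eq.take (k - sm.length), pivot, eq.drop (k - sm.length) ++ lg)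

def quick_select {X : Type} (k : Nat) (l : List X) (le : X → X → Bool) :
    Option (List X × X × List X) :=
  qsp l.length k l le

/-- Data points are lists of naturals. -/
abbrev datapt : Type := List Nat

/-- k-d trees. -/
inductive kdtree : Type where
  | mt_tree : kdtree
  | node : Nat → datapt → kdtree → kdtree → kdtree

/-- Compare two data points on their `i`-th coordinate. -/
def ith_leb (i : Nat) (p q : datapt) : Bool := decide (p.getD i 0 ≤ q.getD i 0)

def median_partition (l : List datapt) (le : datapt → datapt → Bool) :
    Option (List datapt × datapt × List datapt) :=
  quick_select (l.length / 2) l le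

def next_depth (k d : Nat) : Nat := (d + 1) % k

def build_kdtree_ : Nat → Nat → List datapt → Nat → kdtree
  | 0, _, _, _ => .mt_tree
  | fuel + 1, k, data, depth_mod =>
    match data with
    | [] => .mt_tree
    | _ :: _ =>
      match median_partition data (ith_leb depth_mod) with
      | none => .mt_tree
      | some (sm, pvt, lg) =>
        .node depth_mod pvt
          (build_kdtree_ fuel k sm (next_depth k depth_mod))
          (build_kdtree_ fuel k lg (next_depth k depth_mod))

def build_kdtree (k : Nat) (data : List datapt) : kdtree :=
  build_kdtree_ data.length k data 0

/-- Bounding boxes: lower and upper bounds per coordinate (`none` = unbounded). -/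
structure bbox : Type where
  mins : List (Option Nat)
  maxs : List (Option Nat)

def list_set {A : Type} (l : List A) (d : Nat) (v : A) : List A := l.set d v

def bb_split (bb : bbox) (d : Nat) (v : Nat) : bbox × bbox :=
  (⟨bb.mins, list_set bb.maxs d (some v)⟩, ⟨list_set bb.mins d (some v), bb.maxs⟩)

/-- Coordinatewise containment of a point in a bounding box. -/
def bb_contains (bb : bbox) (pt : datapt) : Bool :=
  (List.range pt.length).all (fun i =>
    (match bb.mins.getD i none with
     | none => true
     | some s => decide (s ≤ pt.getD i 0)) &&
    (match bb.maxs.getD i none with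
     | none => true
     | some t => decide (pt.getD i 0 ≤ t)))

/-- Manhattan distance between two points (on naturals). -/
def sum_dist (q p : datapt) : Nat :=
  (List.zipWith (fun a b => (a - b) + (b - a)) q p).sum

/-- Closest enclosed point: clamp each coordinate of `vs` into the box. -/
def cep (vs : datapt) (mins maxs : List (Option Nat)) : datapt :=
  (List.range vs.length).map (fun i =>
    let v := vs.getD i 0
    let v1 := match maxs.getD i none with | none => v | some t => min v t
    match mins.getD i none with | none => v1 | some s => max s v1)

def kdtree_bounded : kdtree → bbox → Bool
  | .mt_tree, _ => true
  | .node ax pt lft rgt, bb =>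
    bb_contains bb pt &&
    kdtree_bounded lft (bb_split bb ax (pt.getD ax 0)).1 &&
    kdtree_bounded rgt (bb_split bb ax (pt.getD ax 0)).2

inductive In_kdtree : datapt → kdtree → Prop where
  | in_root : ∀ ax pt lft rgt, In_kdtree pt (.node ax pt lft rgt)
  | in_left : ∀ v ax pt lft rgt, In_kdtree v lft → In_kdtree v (.node ax pt lft rgt)
  | in_right : ∀ v ax pt lft rgt, In_kdtree v rgt → In_kdtree v (.node ax pt lft rgt)

inductive Contents_kdtree : kdtree → List datapt → Prop where
  | cmt : Contents_kdtree .mt_tree []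
  | cnode : ∀ ax pt lft rgt ll rl, Contents_kdtree lft ll → Contents_kdtree rgt rl →
      Contents_kdtree (.node ax pt lft rgt) (pt :: (ll ++ rl))

/- A (max-)priority queue of elements of `A` keyed by `key : A → Nat`,
   implemented as an unsorted list. -/
abbrev priqueue (A : Type) (_key : A → Nat) : Type := List A

def pq_empty (A : Type) (key : A → Nat) : priqueue A key := []

def pq_insert {A : Type} (key : A → Nat) (e : A) (pq : priqueue A key) : priqueue A key :=
  e :: pq

def pq_size {A : Type} {key : A → Nat} (pq : priqueue A key) : Nat := pq.length

/-- Remove (one) element of maximal key: returns it and the rest. -/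
def select_max {A : Type} (key : A → Nat) : A → List A → A × List A
  | x, [] => (x, [])
  | x, y :: ys =>
    if key y ≤ key x then
      let p := select_max key x ys
      (p.1, y :: p.2)
    else
      let p := select_max key y ys
      (p.1, x :: p.2)

def delete_max {A : Type} (key : A → Nat) : priqueue A key → Option (A × priqueue A key)
  | [] => none
  | x :: xs => some (select_max key x xs)

def peek_max {A : Type} (key : A → Nat) (pq : priqueue A key) : Option A :=
  (delete_max key pq).map Prod.fst

/-- Representation invariant (trivial for the list implementation). -/
def priq {A : Type} (key : A → Nat) (_pq : priqueue A key) : Prop := True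

/-- Abstraction relation between a priority queue and a list of its elements. -/
def PQAbs {A : Type} (key : A → Nat) (pq : priqueue A key) (l : List A) : Prop :=
  pq.Perm l

/-- Insert, but keep the queue size bounded by `K` (discarding a max element). -/
def insert_bounded {A : Type} (K : Nat) (key : A → Nat) (e : A) (pq : priqueue A key) :
    priqueue A key :=
  let updpq := pq_insert key e pq
  if K < pq_size updpq then
    match delete_max key updpq with
    | none => updpq
    | some (_, updpq') => updpq'
  else updpq

/-- K-nearest-neighbor search over a k-d tree with bounding-box pruning. -/
def knn (K k : Nat) : kdtree → bbox → datapt → priqueue datapt (fun _ => 0) → List datapt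
  | .mt_tree, _, _, pq => pq
  | .node ax pt lft rgt, bb, query, pq =>
    let prune : Bool :=
      match peek_max (sum_dist query) pq with
      | none => false
      | some top =>
        decide (K ≤ pq.length) &&
        decide (sum_dist query top < sum_dist query (cep query bb.mins bb.maxs))
    if prune then pq
    else
      let pq0 := insert_bounded K (sum_dist query) pt pq
      let bbs := bb_split bb ax (pt.getD ax 0)
      if ith_leb ax pt query then
        knn K k rgt bbs.2 query (knn K k lft bbs.1 query pq0)
      else
        knn K k lft bbs.1 query (knn K k rgt bbs.2 query pq0)

def knn_search (K k : Nat) (tree : kdtree) (query : datapt) : List datapt :=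
  knn K k tree ⟨List.replicate k none, List.replicate k none⟩ query []

/-- Every element of `l1` has key ≤ every element of `l2`. -/
def all_in_leb {A : Type} (key : A → Nat) (l1 l2 : List A) : Prop :=
  ∀ e1 ∈ l1, ∀ e2 ∈ l2, key e1 ≤ key e2

/-- Drop the first `n` elements of a list. -/
def dropn {A : Type} : Nat → List A → List A
  | 0, lst => lst
  | _ + 1, [] => []
  | n + 1, _ :: t => dropn n t
lemma qsp_spec {X : Type} (le : X → X → Bool) (hle : le_props le) :
    ∀ steps k (l : List X) a x b, qsp steps k l le = some (a, x, b) →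
      (∀ y ∈ a, y ∈ l ∧ le y x = true) ∧ x ∈ l ∧ (∀ y ∈ b, y ∈ l ∧ le x y = true) := by
  obtain ⟨htr, htot⟩ := hle
  intro steps
  induction steps with
  | zero => intro k l a x b h; simp [qsp] at h
  | succ n ih =>
    intro k l a x b h
    match l with
    | [] => simp [qsp] at h
    | pivot :: lst =>
      simp only [qsp] at h
      set sm := lst.filter (fun x => le x pivot && !le pivot x) with hsm
      set eq := lst.filter (fun x => le x pivot && le pivot x) with heq
      set lg := lst.filter (fun x => !le x pivot) with hlg
      have hsm_mem : ∀ y ∈ sm, y ∈ lst ∧ le y pivot = true := by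
        intro y hy; rw [hsm, List.mem_filter] at hy
        simp at hy; exact ⟨hy.1, hy.2.1⟩
      have heq_mem : ∀ y ∈ eq, y ∈ lst ∧ le y pivot = true ∧ le pivot y = true := by
        intro y hy; rw [heq, List.mem_filter] at hy
        simp at hy; exact ⟨hy.1, hy.2.1, hy.2.2⟩
      have hlg_mem : ∀ y ∈ lg, y ∈ lst ∧ le pivot y = true := by
        intro y hy; rw [hlg, List.mem_filter] at hy
        simp at hy
        refine ⟨hy.1, ?_⟩
        rcases htot pivot y with h' | h'
        · exact h'
        · exact absurd h' (by simp [hy.2])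
      split at h
      · -- k < sm.length
        rcases h' : qsp n k sm le with _ | ⟨⟨a', x', b'⟩⟩ <;> rw [h'] at h
        · simp at h
        · simp only [Option.some.injEq, Prod.mk.injEq] at h
          obtain ⟨ha, hx, hb⟩ := h
          obtain ⟨pa, px, pb⟩ := ih k sm a' x' b' h'
          subst ha; subst hx; subst hb
          have hxsm := hsm_mem x' px
          refine ⟨?_, List.mem_cons_of_mem _ hxsm.1, ?_⟩
          · intro y hy
            obtain ⟨hy1, hy2⟩ := pa y hy
            exact ⟨List.mem_cons_of_mem _ (hsm_mem y hy1).1, hy2⟩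
          · intro y hy
            rw [List.mem_append] at hy
            rcases hy with hy | hy
            · obtain ⟨hy1, hy2⟩ := pb y hy
              exact ⟨List.mem_cons_of_mem _ (hsm_mem y hy1).1, hy2⟩
            · rw [List.mem_append] at hy
              rcases hy with hy | hy
              · rcases List.mem_cons.mp hy with hy | hy
                · subst hy; exact ⟨List.mem_cons_self, hxsm.2⟩
                · obtain ⟨hy1, hy2, hy3⟩ := heq_mem y hy
                  exact ⟨List.mem_cons_of_mem _ hy1, htr _ _ _ hxsm.2 hy3⟩
              · obtain ⟨hy1, hy2⟩ := hlg_mem y hy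
                exact ⟨List.mem_cons_of_mem _ hy1, htr _ _ _ hxsm.2 hy2⟩
      · split at h
        · -- lg branch
          rcases h' : qsp n (k - (sm.length + eq.length + 1)) lg le with _ | ⟨⟨a', x', b'⟩⟩ <;> rw [h'] at h
          · simp at h
          · simp only [Option.some.injEq, Prod.mk.injEq] at h
            obtain ⟨ha, hx, hb⟩ := h
            obtain ⟨pa, px, pb⟩ := ih _ lg a' x' b' h'
            subst ha; subst hx; subst hb
            have hxlg := hlg_mem x' px
            refine ⟨?_, List.mem_cons_of_mem _ hxlg.1, ?_⟩
            · intro y hy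
              rw [List.mem_append] at hy
              rcases hy with hy | hy
              · obtain ⟨hy1, hy2⟩ := pa y hy
                exact ⟨List.mem_cons_of_mem _ (hlg_mem y hy1).1, hy2⟩
              · rw [List.mem_append] at hy
                rcases hy with hy | hy
                · obtain ⟨hy1, hy2⟩ := hsm_mem y hy
                  exact ⟨List.mem_cons_of_mem _ hy1, htr _ _ _ hy2 hxlg.2⟩
                · rcases List.mem_cons.mp hy with hy | hy
                  · subst hy; exact ⟨List.mem_cons_self, hxlg.2⟩
                  · obtain ⟨hy1, hy2, hy3⟩ := heq_mem y hy
                    exact ⟨List.mem_cons_of_mem _ hy1, htr _ _ _ hy2 hxlg.2⟩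
            · intro y hy
              obtain ⟨hy1, hy2⟩ := pb y hy
              exact ⟨List.mem_cons_of_mem _ (hlg_mem y hy1).1, hy2⟩
        · -- pivot branch
          simp only [Option.some.injEq, Prod.mk.injEq] at h
          obtain ⟨ha, hx, hb⟩ := h
          subst ha; subst hx; subst hb
          refine ⟨?_, List.mem_cons_self, ?_⟩
          · intro y hy
            rw [List.mem_append] at hy
            rcases hy with hy | hy
            · obtain ⟨hy1, hy2⟩ := hsm_mem y hy
              exact ⟨List.mem_cons_of_mem _ hy1, hy2⟩
            · obtain ⟨hy1, hy2, _⟩ := heq_mem y (List.mem_of_mem_take hy)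
              exact ⟨List.mem_cons_of_mem _ hy1, hy2⟩
          · intro y hy
            rw [List.mem_append] at hy
            rcases hy with hy | hy
            · obtain ⟨hy1, _, hy3⟩ := heq_mem y (List.mem_of_mem_drop hy)
              exact ⟨List.mem_cons_of_mem _ hy1, hy3⟩
            · obtain ⟨hy1, hy2⟩ := hlg_mem y hy
              exact ⟨List.mem_cons_of_mem _ hy1, hy2⟩

lemma ith_leb_props (i : Nat) : le_props (ith_leb i) := by
  constructor
  · intro a b c hab hbc
    simp [ith_leb] at *; omega
  · intro a b
    simp [ith_leb]; omega

lemma quick_select_spec (i : Nat) (l sm lg : List datapt) (p : datapt)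
    (h : quick_select (l.length / 2) l (ith_leb i) = some (sm, p, lg)) :
    (∀ y ∈ sm, y ∈ l ∧ y.getD i 0 ≤ p.getD i 0) ∧ p ∈ l ∧
    (∀ y ∈ lg, y ∈ l ∧ p.getD i 0 ≤ y.getD i 0) := by
  obtain ⟨h1, h2, h3⟩ := qsp_spec (ith_leb i) (ith_leb_props i) _ _ _ _ _ _ h
  refine ⟨?_, h2, ?_⟩
  · intro y hy; obtain ⟨m, hle⟩ := h1 y hy
    exact ⟨m, by simpa [ith_leb] using hle⟩
  · intro y hy; obtain ⟨m, hle⟩ := h3 y hy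
    exact ⟨m, by simpa [ith_leb] using hle⟩

lemma getD_set_getD {A : Type} (l : List A) (d i : Nat) (v dflt : A) :
    (l.set d v).getD i dflt = if i = d ∧ d < l.length then v else l.getD i dflt := by
  by_cases hid : i = d
  · subst hid
    by_cases hd : i < l.length
    · simp [List.getD_eq_getElem?_getD, List.getElem?_set, hd]
    · simp [List.getD_eq_getElem?_getD, List.getElem?_set, hd,
        List.getElem?_eq_none (Nat.le_of_not_lt hd)]
  · simp [List.getD_eq_getElem?_getD, List.getElem?_set, hid, Ne.symm hid]

lemma bb_contains_set_max (mins maxs : List (Option Nat)) (y : datapt) (d v : Nat)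
    (h : bb_contains ⟨mins, maxs⟩ y = true) (hle : y.getD d 0 ≤ v) :
    bb_contains ⟨mins, list_set maxs d (some v)⟩ y = true := by
  simp only [bb_contains, List.all_eq_true] at h ⊢
  intro i hi
  have := h i hi
  simp only [Bool.and_eq_true] at this ⊢
  refine ⟨this.1, ?_⟩
  simp only [list_set, getD_set_getD]
  by_cases hc : i = d ∧ d < maxs.length
  · rw [if_pos hc, hc.1]; simpa using hle
  · rw [if_neg hc]; exact this.2

lemma bb_contains_set_min (mins maxs : List (Option Nat)) (y : datapt) (d v : Nat)
    (h : bb_contains ⟨mins, maxs⟩ y = true) (hle : v ≤ y.getD d 0) :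
    bb_contains ⟨list_set mins d (some v), maxs⟩ y = true := by
  simp only [bb_contains, List.all_eq_true] at h ⊢
  intro i hi
  have := h i hi
  simp only [Bool.and_eq_true] at this ⊢
  refine ⟨?_, this.2⟩
  simp only [list_set, getD_set_getD]
  by_cases hc : i = d ∧ d < mins.length
  · rw [if_pos hc, hc.1]; simpa using hle
  · rw [if_neg hc]; exact this.1

lemma build_kdtree__bounded (fuel : Nat) :
    ∀ (k : Nat) (data : List datapt) (dm : Nat) (mins maxs : List (Option Nat)),
    (∀ y ∈ data, bb_contains ⟨mins, maxs⟩ y = true) →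
    kdtree_bounded (build_kdtree_ fuel k data dm) ⟨mins, maxs⟩ = true := by
  induction fuel with
  | zero => intro k data dm mins maxs _; simp [build_kdtree_, kdtree_bounded]
  | succ n ih =>
    intro k data dm mins maxs hcont
    match data with
    | [] => simp [build_kdtree_, kdtree_bounded]
    | p0 :: rest =>
      simp only [build_kdtree_]
      rcases hmp : median_partition (p0 :: rest) (ith_leb dm) with _ | ⟨⟨sm, pvt, lg⟩⟩
      · simp [kdtree_bounded]
      · obtain ⟨hsm, hpvt, hlg⟩ := quick_select_spec dm (p0 :: rest) sm lg pvt hmp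
        simp only [kdtree_bounded, Bool.and_eq_true]
        refine ⟨⟨hcont _ hpvt, ?_⟩, ?_⟩
        · simp only [bb_split]
          exact ih k sm _ _ _ (fun y hy =>
            bb_contains_set_max mins maxs y dm _ (hcont y (hsm y hy).1) (hsm y hy).2)
        · simp only [bb_split]
          exact ih k lg _ _ _ (fun y hy =>
            bb_contains_set_min mins maxs y dm _ (hcont y (hlg y hy).1) (hlg y hy).2)

lemma bb_contains_replicate_none (k : Nat) (y : datapt) :
    bb_contains ⟨List.replicate k none, List.replicate k none⟩ y = true := by
  simp only [bb_contains, List.all_eq_true]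
  intro i hi
  have : (List.replicate k (none : Option Nat)).getD i none = none := by
    rcases Nat.lt_or_ge i k with h | h
    · simp [List.getD_eq_getElem?_getD, List.getElem?_replicate, h]
    · simp [List.getD_eq_getElem?_getD,
        List.getElem?_eq_none (by simpa using h : (List.replicate k (none : Option Nat)).length ≤ i)]
  simp [this]

theorem build_kdtree_bounded (k : Nat) (data : List datapt) (hk : 0 < k)
    (hdim : ∀ v' ∈ data, v'.length = k) :
    kdtree_bounded (build_kdtree k data)
      ⟨List.replicate k none, List.replicate k none⟩ = true := by
  exact build_kdtree__bounded data.length k data 0 _ _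
    (fun y _ => bb_contains_replicate_none k y)
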